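/- Let α₁, α₂, β₁, β₂ be strictly positive rationals. Define vectors in ℚ⁴: v₁ = α₁ • (-1,0,1,0), v₂ = α₂ • (0,1,0,-1), u₁ = β₁ • (1,0,-1,0), u₂ = β₂ • (0,-1,0,1). For m, n ∈ ℚ let x(m,n) = m • (v₁ + v₂) + n • (u₁ + u₂) with coordinates (x₁,x₂,x₃,x₄). Then β₁/α₁ = β₂/α₂ if and only if for all nonnegative rationals m, n, max(min(x₁,x₂), min(x₃,x₄)) ≤ 0. -/

import Mathlib

theorem stmt_0 (α₁ α₂ β₁ β₂ : ℚ) (hα₁ : 0 < α₁) (hα₂ : 0 < α₂)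
    (hβ₁ : 0 < β₁) (hβ₂ : 0 < β₂)
    (v₁ v₂ u₁ u₂ : Fin 4 → ℚ)
    (hv₁ : v₁ = α₁ • ![-1, 0, 1, 0]) (hv₂ : v₂ = α₂ • ![0, 1, 0, -1])
    (hu₁ : u₁ = β₁ • ![1, 0, -1, 0]) (hu₂ : u₂ = β₂ • ![0, -1, 0, 1])
    (x : ℚ → ℚ → Fin 4 → ℚ)
    (hx : ∀ m n : ℚ, x m n = m • (v₁ + v₂) + n • (u₁ + u₂)) :
    β₁ / α₁ = β₂ / α₂ ↔
      ∀ m n : ℚ, 0 ≤ m → 0 ≤ n →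
        max (min (x m n 0) (x m n 1)) (min (x m n 2) (x m n 3)) ≤ 0 := by
  subst hv₁ hv₂ hu₁ hu₂
  simp only [hx, Pi.add_apply, Pi.smul_apply, Matrix.cons_val_zero, Matrix.cons_val_one,
    Matrix.head_cons, Matrix.cons_val_two, Matrix.tail_cons, Matrix.cons_val_three,
    smul_eq_mul]
  constructor
  · intro h m n hm hn
    have hc : β₁ * α₂ = β₂ * α₁ := by
      field_simp at h; linarith
    apply max_le
    · rcases le_or_gt (n * β₁) (m * α₁) with h1 | h1
      · exact min_le_of_left_le (by nlinarith)
      · exact min_le_of_right_le (by nlinarith)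
    · rcases le_or_gt (m * α₁) (n * β₁) with h1 | h1
      · exact min_le_of_left_le (by nlinarith)
      · exact min_le_of_right_le (by nlinarith)
  · intro h
    by_contra hne
    have h2 : (0:ℚ) < 2 * α₁ * α₂ := by positivity
    have hd : (β₁ * α₂ + β₂ * α₁) / (2 * α₁ * α₂) * (2 * α₁ * α₂) = β₁ * α₂ + β₂ * α₁ :=
      div_mul_cancel₀ _ (ne_of_gt h2)
    have hm0 : (0:ℚ) ≤ (β₁ * α₂ + β₂ * α₁) / (2 * α₁ * α₂) := by positivity
    have H := h ((β₁ * α₂ + β₂ * α₁) / (2 * α₁ * α₂)) 1 hm0 zero_le_one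
    set d := (β₁ * α₂ + β₂ * α₁) / (2 * α₁ * α₂) with hdd
    rcases lt_or_gt_of_ne hne with hlt | hlt
    · have hc : β₁ * α₂ < β₂ * α₁ := by
        rw [div_lt_div_iff₀ hα₁ hα₂] at hlt; linarith
      rcases min_le_iff.mp (le_trans (le_max_right _ _) H) with hcd | hcd <;>
        nlinarith [mul_le_mul_of_nonneg_right hcd hα₂.le,
          mul_le_mul_of_nonneg_right hcd hα₁.le]
    · have hc : β₂ * α₁ < β₁ * α₂ := by
        rw [div_lt_div_iff₀ hα₂ hα₁] at hlt; linarith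
      rcases min_le_iff.mp (le_trans (le_max_left _ _) H) with hcd | hcd <;>
        nlinarith [mul_le_mul_of_nonneg_right hcd hα₂.le,
          mul_le_mul_of_nonneg_right hcd hα₁.le]
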